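/- Let G be a finite cyclic group of prime order q with generator g, H : Fin m → G, and U a finite set of clients with seeds s_i ∈ ZMod q and input vectors x_i ∈ (ZMod q)^m. Let r_i ∈ G^m be given by (r_i)_j = H(j)^{s_i}, let y_i ∈ G^m be given by (y_i)_j = g^{(x_i)_j} · (r_i)_j, and let s_R = Σ_{i ∈ U} s_i and R_j = H(j)^{s_R}. Then for every coordinate j: (Π_{i ∈ U} (y_i)_j) / R_j = g^{Σ_{i ∈ U} (x_i)_j}. -/

import Mathlib

lemma pow_congr_zmod {G : Type*} [CommGroup G] [Fintype G] {q : ℕ}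
    (hcard : Fintype.card G = q) (a : G) {n n' : ℕ}
    (h : (n : ZMod q) = (n' : ZMod q)) : a ^ n = a ^ n' := by
  rw [pow_eq_pow_iff_modEq]
  exact (ZMod.natCast_eq_natCast_iff _ _ _).mp h |>.of_dvd (hcard ▸ orderOf_dvd_card)

theorem stmt7 {G ι : Type*} [CommGroup G] [Fintype G] (q m : ℕ) (hq : q.Prime)
    (hcard : Fintype.card G = q) (g : G) (hg : ∀ a : G, a ∈ Subgroup.zpowers g)
    (H : Fin m → G) (U : Finset ι) (s : ι → ZMod q) (x : ι → Fin m → ZMod q)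
    (r y : ι → Fin m → G)
    (hr : ∀ i j, r i j = H j ^ (s i).val)
    (hy : ∀ i j, y i j = g ^ (x i j).val * r i j)
    (sR : ZMod q) (hsR : sR = ∑ i ∈ U, s i)
    (R : Fin m → G) (hR : ∀ j, R j = H j ^ sR.val) :
    ∀ j, (∏ i ∈ U, y i j) / R j = g ^ (∑ i ∈ U, x i j).val := by
  intro j
  haveI : NeZero q := ⟨hq.ne_zero⟩
  have h1 : ∏ i ∈ U, y i j =
      g ^ (∑ i ∈ U, (x i j).val) * H j ^ (∑ i ∈ U, (s i).val) := by
    simp only [hy, hr, Finset.prod_mul_distrib, Finset.prod_pow_eq_pow_sum]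
  have h2 : H j ^ (∑ i ∈ U, (s i).val) = R j := by
    rw [hR j]
    refine pow_congr_zmod hcard _ ?_
    rw [hsR]
    simp [ZMod.natCast_val, ZMod.cast_id]
  have h3 : g ^ (∑ i ∈ U, (x i j).val) = g ^ (∑ i ∈ U, x i j).val := by
    refine pow_congr_zmod hcard _ ?_
    simp [ZMod.natCast_val, ZMod.cast_id]
  rw [h1, h2, h3, mul_div_assoc, div_self', mul_one]
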